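/- Let (X_n) be a stochastic process on a probability space (Ω, F, P). Suppose φ : (0,1) × (0,∞) × ℕ → ℝ is a modulus of finite crossings for (X_n) (i.e., P(∃ [α,β] ∈ P(M,l) with Cr_∞([α,β], X) ≥ φ(λ, M, l)) < λ for all λ ∈ (0,1), M > 0, l ∈ ℕ), and f : (0,1) → ℝ is a modulus of uniform boundedness for (X_n) (i.e., P(sup_{n∈ℕ} |X_n| ≥ f(λ)) < λ for all λ ∈ (0,1)). Then ψ(λ, ε) := l · φ(λ/2, M, l), where M := f(λ/2) and l := ⌈4M/ε⌉, is a modulus of finite fluctuations for (X_n): P(Fluc_∞(ε, X) ≥ ψ(λ, ε)) < λ for all λ, ε ∈ (0,1). -/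
import Mathlib


open MeasureTheory ENNReal

/-- There exist `k` many ε-fluctuations in the sequence `x`. -/
def HasFluc (ε : ℝ) (x : ℕ → ℝ) (k : ℕ) : Prop :=
  ∃ i j : ℕ → ℕ, (∀ l < k, i l < j l) ∧ (∀ l, l + 1 < k → j l ≤ i (l + 1)) ∧
    ∀ l < k, ε ≤ |x (i l) - x (j l)|

/-- There exist `k` many `[α,β]`-crossings in the sequence `x`. -/
def HasCross (α β : ℝ) (x : ℕ → ℝ) (k : ℕ) : Prop :=
  ∃ i j : ℕ → ℕ, (∀ l < k, i l < j l) ∧ (∀ l, l + 1 < k → j l ≤ i (l + 1)) ∧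
    ∀ l < k, (x (i l) ≤ α ∧ β ≤ x (j l)) ∨ (β ≤ x (i l) ∧ x (j l) ≤ α)

/-- `Fluc_∞(ε, x)`, the total number of ε-fluctuations of `x`, as a value in `ℝ≥0∞`. -/
noncomputable def flucInf (ε : ℝ) (x : ℕ → ℝ) : ℝ≥0∞ :=
  ⨆ k ∈ {k : ℕ | HasFluc ε x k}, (k : ℝ≥0∞)

/-- `Cr_∞([α,β], x)`, the total number of `[α,β]`-crossings of `x`, as a value in `ℝ≥0∞`. -/
noncomputable def crossInf (α β : ℝ) (x : ℕ → ℝ) : ℝ≥0∞ :=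
  ⨆ k ∈ {k : ℕ | HasCross α β x k}, (k : ℝ≥0∞)

/-- If `φ` is a modulus of finite crossings for `X` (over all partitions `𝒫(M,l)` of `[-M,M]`
into `l` equal subintervals) and `f` is a modulus of uniform boundedness for `X`, then
`ψ(λ, ε) := l · φ(λ/2, M, l)` with `M := f(λ/2)`, `l := ⌈4M/ε⌉` is a modulus of finite
fluctuations for `X`. -/
lemma hasFluc_mono {eps : ℝ} {x : ℕ → ℝ} {k k' : ℕ} (h : HasFluc eps x k) (hk : k' ≤ k) :
    HasFluc eps x k' := by
  obtain ⟨i, j, h1, h2, h3⟩ := h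
  exact ⟨i, j, fun l hl => h1 l (lt_of_lt_of_le hl hk),
    fun l hl => h2 l (lt_of_lt_of_le hl hk), fun l hl => h3 l (lt_of_lt_of_le hl hk)⟩

lemma chain_le {i j : ℕ → ℕ} {m : ℕ} (h1 : ∀ t < m, i t < j t)
    (h2 : ∀ t, t + 1 < m → j t ≤ i (t + 1)) :
    ∀ t t', t < t' → t' < m → j t ≤ i t' := by
  intro t t'
  induction t' with
  | zero => omega
  | succ n ih =>
    intro ht hn
    rcases Nat.lt_succ_iff_lt_or_eq.mp ht with h | h
    · exact le_trans (ih h (by omega))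
        (le_trans (le_of_lt (h1 n (by omega))) (h2 n hn))
    · subst h; exact h2 t hn

lemma key_comb (x : ℕ → ℝ) (eps M φ' : ℝ) (l m : ℕ)
    (hM : 0 < M) (hl : 0 < l) (hw : 4 * M ≤ (l : ℝ) * eps) (heps : 0 < eps)
    (hbd : ∀ n, |x n| < M) (hfl : HasFluc eps x m) (hm : (l : ℝ) * φ' ≤ (m : ℝ)) :
    ∃ i : ℕ, i < l ∧ ENNReal.ofReal φ' ≤
      crossInf (-M + 2 * M * (i : ℝ) / (l : ℝ)) (-M + 2 * M * ((i : ℝ) + 1) / (l : ℝ)) x := by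
  obtain ⟨i, j, h1, h2, h3⟩ := hfl
  have hL : (0 : ℝ) < (l : ℝ) := by exact_mod_cast hl
  set g : ℕ → ℕ := fun t => ⌈(min (x (i t)) (x (j t)) + M) * (l : ℝ) / (2 * M)⌉₊ with hg
  have hcross : ∀ t < m, g t < l ∧
      ((x (i t) ≤ -M + 2 * M * (g t : ℝ) / (l : ℝ) ∧
        -M + 2 * M * ((g t : ℝ) + 1) / (l : ℝ) ≤ x (j t)) ∨
       (-M + 2 * M * ((g t : ℝ) + 1) / (l : ℝ) ≤ x (i t) ∧
        x (j t) ≤ -M + 2 * M * (g t : ℝ) / (l : ℝ))) := by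
    intro t ht
    set a := min (x (i t)) (x (j t)) with ha
    set b := max (x (i t)) (x (j t)) with hb
    have habs : b - a = |x (j t) - x (i t)| := max_sub_min_eq_abs _ _
    have hab : eps ≤ b - a := by rw [habs, abs_sub_comm]; exact h3 t ht
    have h1' := abs_lt.mp (hbd (i t))
    have h2' := abs_lt.mp (hbd (j t))
    have haM : -M < a := lt_min h1'.1 h2'.1
    have hbM : b < M := max_lt h1'.2 h2'.2
    have hr0 : 0 ≤ (a + M) * (l : ℝ) / (2 * M) :=
      div_nonneg (mul_nonneg (by linarith) hL.le) (by linarith)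
    have hG1 : (a + M) * (l : ℝ) / (2 * M) ≤ (g t : ℝ) := Nat.le_ceil _
    have hG2 : (g t : ℝ) < (a + M) * (l : ℝ) / (2 * M) + 1 := Nat.ceil_lt_add_one hr0
    have key1 : (a + M) * (l : ℝ) ≤ 2 * M * (g t : ℝ) := by
      have := (div_le_iff₀ (by positivity : (0:ℝ) < 2 * M)).mp hG1
      linarith
    have key2 : 2 * M * (g t : ℝ) < (a + M) * (l : ℝ) + 2 * M := by
      have h' : (g t : ℝ) - 1 < (a + M) * (l : ℝ) / (2 * M) := by linarith
      have := (lt_div_iff₀ (by positivity : (0:ℝ) < 2 * M)).mp h'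
      linarith
    have hαa : a ≤ -M + 2 * M * (g t : ℝ) / (l : ℝ) := by
      have : a + M ≤ 2 * M * (g t : ℝ) / (l : ℝ) := (le_div_iff₀ hL).mpr (by linarith)
      linarith
    have h4 : 2 * M * ((g t : ℝ) + 1) ≤ (b + M) * (l : ℝ) := by nlinarith
    have hβb : -M + 2 * M * ((g t : ℝ) + 1) / (l : ℝ) ≤ b := by
      have : 2 * M * ((g t : ℝ) + 1) / (l : ℝ) ≤ b + M := (div_le_iff₀ hL).mpr h4
      linarith
    have hgl : g t < l := by
      have h5 : (b + M) * (l : ℝ) < 2 * M * (l : ℝ) := by nlinarith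
      have h6 : (g t : ℝ) < (l : ℝ) := by nlinarith
      exact_mod_cast h6
    refine ⟨hgl, ?_⟩
    rcases le_total (x (i t)) (x (j t)) with hle | hle
    · exact Or.inl ⟨(min_eq_left hle) ▸ hαa, (max_eq_right hle) ▸ hβb⟩
    · exact Or.inr ⟨(max_eq_left hle) ▸ hβb, (min_eq_right hle) ▸ hαa⟩
  -- pigeonhole
  have hsum : ∑ i' ∈ Finset.range l, ((Finset.range m).filter (fun t => g t = i')).card = m := by
    have h := Finset.card_eq_sum_card_fiberwise (s := Finset.range m) (t := Finset.range l)
      (f := g) (fun t ht => Finset.mem_range.mpr (hcross t (Finset.mem_range.mp ht)).1)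
    simpa using h.symm
  have hpig : ∃ i' < l, φ' ≤ (((Finset.range m).filter (fun t => g t = i')).card : ℝ) := by
    by_contra hc
    push_neg at hc
    have hlt : (m : ℝ) < (l : ℝ) * φ' := by
      have : (m : ℝ) = ∑ i' ∈ Finset.range l,
          (((Finset.range m).filter (fun t => g t = i')).card : ℝ) := by
        rw [← Nat.cast_sum, hsum]
      rw [this]
      calc ∑ i' ∈ Finset.range l, (((Finset.range m).filter (fun t => g t = i')).card : ℝ)
          < ∑ _i' ∈ Finset.range l, φ' :=
            Finset.sum_lt_sum_of_nonempty ⟨0, Finset.mem_range.mpr hl⟩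
              (fun i' hi' => hc i' (Finset.mem_range.mp hi'))
        _ = (l : ℝ) * φ' := by simp [Finset.sum_const, nsmul_eq_mul]
    linarith
  obtain ⟨i', hi'l, hi'⟩ := hpig
  set T := (Finset.range m).filter (fun t => g t = i') with hT
  refine ⟨i', hi'l, ?_⟩
  -- build a crossing of cardinality T.card
  set e : ℕ → ℕ := fun s => if h : s < T.card then T.orderEmbOfFin rfl ⟨s, h⟩ else 0 with he
  have hmemT : ∀ s (h : s < T.card), e s ∈ T := by
    intro s h
    simp only [he, dif_pos h]
    exact Finset.orderEmbOfFin_mem T rfl ⟨s, h⟩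
  have hem : ∀ s (h : s < T.card), e s < m ∧ g (e s) = i' := by
    intro s h
    have := hmemT s h
    rw [hT, Finset.mem_filter, Finset.mem_range] at this
    exact this
  have hmono : ∀ s, s + 1 < T.card → e s < e (s + 1) := by
    intro s h
    have h' : s < T.card := by omega
    simp only [he, dif_pos h, dif_pos h']
    exact (T.orderEmbOfFin rfl).strictMono (by simp [Fin.mk_lt_mk])
  have hHC : HasCross (-M + 2 * M * (i' : ℝ) / (l : ℝ)) (-M + 2 * M * ((i' : ℝ) + 1) / (l : ℝ))
      x T.card := by
    refine ⟨i ∘ e, j ∘ e, fun s hs => h1 _ (hem s hs).1, fun s hs => ?_, fun s hs => ?_⟩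
    · exact chain_le h1 h2 _ _ (hmono s hs) (hem (s + 1) hs).1
    · have h5 := hcross (e s) (hem s hs).1
      rw [(hem s hs).2] at h5
      exact h5.2
  calc ENNReal.ofReal φ' ≤ (T.card : ℝ≥0∞) := by
        rw [← ENNReal.ofReal_natCast]
        exact ENNReal.ofReal_le_ofReal hi'
    _ ≤ crossInf (-M + 2 * M * (i' : ℝ) / (l : ℝ)) (-M + 2 * M * ((i' : ℝ) + 1) / (l : ℝ)) x :=
        le_biSup _ hHC

theorem stmt11 {Ω : Type} [MeasurableSpace Ω] (μ : Measure Ω) [IsProbabilityMeasure μ]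
    (X : ℕ → Ω → ℝ) (hX : ∀ n, Measurable (X n))
    (φ : ℝ → ℝ → ℕ → ℝ)
    (hφ : ∀ lam ∈ Set.Ioo (0 : ℝ) 1, ∀ M : ℝ, 0 < M → ∀ l : ℕ,
      μ {ω | ∃ i : ℕ, i < l ∧ ENNReal.ofReal (φ lam M l) ≤
          crossInf (-M + 2 * M * (i : ℝ) / (l : ℝ)) (-M + 2 * M * ((i : ℝ) + 1) / (l : ℝ))
            fun n => X n ω}
        < ENNReal.ofReal lam)
    (f : ℝ → ℝ)
    (hf : ∀ lam ∈ Set.Ioo (0 : ℝ) 1,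
      μ {ω | ENNReal.ofReal (f lam) ≤ ⨆ n : ℕ, ENNReal.ofReal |X n ω|} < ENNReal.ofReal lam) :
    ∀ lam ∈ Set.Ioo (0 : ℝ) 1, ∀ eps ∈ Set.Ioo (0 : ℝ) 1, ∀ M : ℝ, ∀ l : ℕ,
      M = f (lam / 2) → l = ⌈4 * M / eps⌉₊ →
      μ {ω | ENNReal.ofReal ((l : ℝ) * φ (lam / 2) M l) ≤ flucInf eps fun n => X n ω}
        < ENNReal.ofReal lam := by
  intro lam hlam eps heps M l hMdef hldef
  have hlam2 : lam / 2 ∈ Set.Ioo (0 : ℝ) 1 := ⟨by linarith [hlam.1], by linarith [hlam.2]⟩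
  have hμB := hf (lam / 2) hlam2
  rw [← hMdef] at hμB
  have hMpos : 0 < M := by
    by_contra hM
    push_neg at hM
    have hBuniv : {ω | ENNReal.ofReal M ≤ ⨆ n : ℕ, ENNReal.ofReal |X n ω|} = Set.univ := by
      ext ω
      simp [ENNReal.ofReal_eq_zero.mpr hM]
    rw [hBuniv, measure_univ] at hμB
    exact absurd hμB (not_lt.mpr (ENNReal.ofReal_lt_one.mpr (by linarith [hlam.2])).le)
  have hμA := hφ (lam / 2) hlam2 M hMpos l
  have hlpos : 0 < l := by
    rw [hldef]
    exact Nat.ceil_pos.mpr (div_pos (by linarith) heps.1)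
  have hw : 4 * M ≤ (l : ℝ) * eps := by
    have h1 : 4 * M / eps ≤ (l : ℝ) := by rw [hldef]; exact Nat.le_ceil _
    have := (div_le_iff₀ heps.1).mp h1
    linarith
  set φ' := φ (lam / 2) M l with hφ'
  set A := {ω | ∃ i : ℕ, i < l ∧ ENNReal.ofReal φ' ≤
      crossInf (-M + 2 * M * (i : ℝ) / (l : ℝ)) (-M + 2 * M * ((i : ℝ) + 1) / (l : ℝ))
        fun n => X n ω} with hA
  set B := {ω | ENNReal.ofReal M ≤ ⨆ n : ℕ, ENNReal.ofReal |X n ω|} with hB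
  have hsub : {ω | ENNReal.ofReal ((l : ℝ) * φ') ≤ flucInf eps fun n => X n ω} ⊆ A ∪ B := by
    intro ω hω
    by_cases hωB : ω ∈ B
    · exact Or.inr hωB
    left
    rw [hB, Set.mem_setOf_eq, not_le] at hωB
    have hbd : ∀ n, |X n ω| < M := by
      intro n
      have h1 : ENNReal.ofReal |X n ω| < ENNReal.ofReal M :=
        lt_of_le_of_lt (le_iSup (fun n => ENNReal.ofReal |X n ω|) n) hωB
      exact (ENNReal.ofReal_lt_ofReal_iff hMpos).mp h1
    rw [Set.mem_setOf_eq] at hω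
    rw [hA, Set.mem_setOf_eq]
    rcases le_or_gt φ' 0 with hφ0 | hφ0
    · exact ⟨0, hlpos, by simp [ENNReal.ofReal_eq_zero.mpr hφ0]⟩
    have hlφ : 0 < (l : ℝ) * φ' := mul_pos (by exact_mod_cast hlpos) hφ0
    have hfl : HasFluc eps (fun n => X n ω) ⌈(l : ℝ) * φ'⌉₊ := by
      by_contra hns
      have hub : flucInf eps (fun n => X n ω) ≤ ((⌈(l : ℝ) * φ'⌉₊ - 1 : ℕ) : ℝ≥0∞) := by
        refine iSup₂_le fun k hk => ?_
        have hkm : k < ⌈(l : ℝ) * φ'⌉₊ := by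
          by_contra hk2
          push_neg at hk2
          exact hns (hasFluc_mono hk hk2)
        exact_mod_cast Nat.cast_le.mpr (Nat.le_sub_one_of_lt hkm)
      have h5 := le_trans hω hub
      rw [← ENNReal.ofReal_natCast] at h5
      have h6 := (ENNReal.ofReal_le_ofReal_iff (by positivity)).mp h5
      have h7 : ⌈(l : ℝ) * φ'⌉₊ ≤ ⌈(l : ℝ) * φ'⌉₊ - 1 := Nat.ceil_le.mpr h6
      have h8 : 0 < ⌈(l : ℝ) * φ'⌉₊ := Nat.ceil_pos.mpr hlφ
      exact absurd h7 (not_le.mpr (Nat.sub_lt h8 one_pos))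
    exact key_comb (fun n => X n ω) eps M φ' l _ hMpos hlpos hw heps.1 hbd hfl (Nat.le_ceil _)
  calc μ {ω | ENNReal.ofReal ((l : ℝ) * φ') ≤ flucInf eps fun n => X n ω}
      ≤ μ (A ∪ B) := measure_mono hsub
    _ ≤ μ A + μ B := measure_union_le _ _
    _ < ENNReal.ofReal (lam / 2) + ENNReal.ofReal (lam / 2) := ENNReal.add_lt_add hμA hμB
    _ = ENNReal.ofReal lam := by
        rw [← ENNReal.ofReal_add (by linarith [hlam.1]) (by linarith [hlam.1])]
        norm_num
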